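/- Let ξ > 0, let E be the Euclidean space ℝ³ (EuclideanSpace ℝ (Fin 3)), and define z : E → E by z(v) = v / √(1 + ‖v‖²/ξ²). Then z is differentiable everywhere on E, and its Fréchet derivative at each v ∈ E is the linear map x ↦ ((ξ² + ‖v‖²)·x − ⟨v, x⟩·v) / (ξ²·(1 + ‖v‖²/ξ²)^(3/2)). -/

import Mathlib

theorem stmt_9 (ξ : ℝ) (hξ : 0 < ξ) :
    ∀ v : EuclideanSpace ℝ (Fin 3),
      HasFDerivAt (fun v : EuclideanSpace ℝ (Fin 3) =>
          (Real.sqrt (1 + ‖v‖ ^ 2 / ξ ^ 2))⁻¹ • v)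
        ((ξ ^ 2 * (1 + ‖v‖ ^ 2 / ξ ^ 2) ^ ((3 : ℝ) / 2))⁻¹ •
          ((ξ ^ 2 + ‖v‖ ^ 2) • ContinuousLinearMap.id ℝ (EuclideanSpace ℝ (Fin 3))
            - (innerSL ℝ v).smulRight v)) v := by
  intro v
  have hξ2 : (0:ℝ) < ξ ^ 2 := by positivity
  set a : ℝ := 1 + ‖v‖ ^ 2 / ξ ^ 2 with ha
  have hapos : 0 < a := by positivity
  have hsq : 0 < Real.sqrt a := Real.sqrt_pos.mpr hapos
  have h1 : HasDerivAt (fun t : ℝ => 1 + t / ξ ^ 2) ((ξ^2)⁻¹) (‖v‖^2) := by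
    simpa using ((hasDerivAt_id (‖v‖^2)).div_const (ξ^2)).const_add 1
  have h2 : HasDerivAt (fun t : ℝ => Real.sqrt (1 + t / ξ ^ 2))
      ((ξ^2)⁻¹ / (2 * Real.sqrt a)) (‖v‖^2) := h1.sqrt (ne_of_gt hapos)
  have h3 : HasDerivAt (fun t : ℝ => (Real.sqrt (1 + t / ξ ^ 2))⁻¹)
      (-((ξ^2)⁻¹ / (2 * Real.sqrt a)) / (Real.sqrt a)^2) (‖v‖^2) :=
    h2.inv (ne_of_gt hsq)
  have h4 : HasFDerivAt (fun w : EuclideanSpace ℝ (Fin 3) => ‖w‖ ^ 2)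
      (2 • (innerSL ℝ v)) v := (hasStrictFDerivAt_norm_sq v).hasFDerivAt
  have h5 : HasFDerivAt
      (fun w : EuclideanSpace ℝ (Fin 3) => (Real.sqrt (1 + ‖w‖ ^ 2 / ξ ^ 2))⁻¹)
      ((-((ξ^2)⁻¹ / (2 * Real.sqrt a)) / (Real.sqrt a)^2) • (2 • (innerSL ℝ v))) v :=
    by have := h3.comp_hasFDerivAt v h4; exact this
  have h6 := h5.smul (hasFDerivAt_id v)
  convert h6 using 1
  iterate 7 rfl
  have hsa : Real.sqrt a * Real.sqrt a = a := Real.mul_self_sqrt hapos.le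
  have hr32 : a ^ ((3:ℝ)/2) = a * Real.sqrt a := by
    rw [show (3:ℝ)/2 = 1 + 1/2 by norm_num, Real.rpow_add hapos, Real.rpow_one,
      ← Real.sqrt_eq_rpow]
  have hvn : ξ ^ 2 + ‖v‖ ^ 2 = ξ ^ 2 * a := by
    rw [ha, mul_add, mul_one, mul_div_cancel₀ _ hξ2.ne']
  refine ContinuousLinearMap.ext fun x => ?_
  simp only [ContinuousLinearMap.smul_apply, ContinuousLinearMap.sub_apply,
    ContinuousLinearMap.add_apply, ContinuousLinearMap.coe_id', id_eq,
    ContinuousLinearMap.smulRight_apply, ContinuousLinearMap.coe_smul',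
    Pi.smul_apply, innerSL_apply_apply]
  rw [← ha, hr32, hvn, smul_sub, smul_smul, smul_smul, smul_eq_mul, nsmul_eq_mul]
  have hs0 : Real.sqrt a ≠ 0 := ne_of_gt hsq
  have ha0 : a ≠ 0 := ne_of_gt hapos
  have c1 : (ξ ^ 2 * (a * Real.sqrt a))⁻¹ * (ξ ^ 2 * a) = (Real.sqrt a)⁻¹ := by
    field_simp
  have c2 : (ξ ^ 2 * (a * Real.sqrt a))⁻¹ * (inner ℝ v x : ℝ) =
      -(-((ξ ^ 2)⁻¹ / (2 * Real.sqrt a)) / Real.sqrt a ^ 2 * (2 * (inner ℝ v x : ℝ))) := by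
    field_simp
    rw [Real.sq_sqrt hapos.le]
  rw [c1, c2, neg_smul, sub_neg_eq_add]
  norm_num
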